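/- (Asymptotics of B∘b^{-1}.) Let β > 0 and let B be a Young function with B(t) = N e^{t^β} for large t, B = ∫_0^· b. Then B(b^{-1}(t)) = (1/β) t (log t)^{1/β - 1} + ((1-β)²/β³) t (log t)^{1/β - 2} log log t + o(t (log t)^{1/β - 2} log log t) as t → ∞. In particular, there exists t₀ > 1 such that B(b^{-1}(t)) ≥ (t/β)(log t)^{1/β - 1} for all t > t₀. -/

import Mathlib

open Real MeasureTheory Filter

lemma key1 (β N t₀ : ℝ) (hβ : 0 < β) (ht₀ : 0 < t₀)
    (b B : ℝ → ℝ) (hmono : Monotone b)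
    (hB : ∀ t : ℝ, 0 ≤ t → B t = ∫ τ in (0:ℝ)..t, b τ)
    (hBform : ∀ t > t₀, B t = N * Real.exp (t ^ β)) :
    ∀ t > t₀, b t = N * (Real.exp (t ^ β) * (β * t ^ (β - 1))) := by
  have hInt : ∀ u v : ℝ, IntervalIntegrable b volume u v := fun u v =>
    (hmono.monotoneOn _).intervalIntegrable
  have hsub : ∀ s t : ℝ, 0 ≤ s → s ≤ t → B t - B s = ∫ τ in s..t, b τ := by
    intro s t hs hst
    rw [hB t (hs.trans hst), hB s hs]
    rw [← intervalIntegral.integral_add_adjacent_intervals (hInt 0 s) (hInt s t)]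
    ring
  have hslope_ub : ∀ s t : ℝ, 0 ≤ s → s < t → (B t - B s) / (t - s) ≤ b t := by
    intro s t hs hst
    rw [hsub s t hs hst.le]
    rw [div_le_iff₀ (by linarith)]
    calc ∫ τ in s..t, b τ ≤ ∫ τ in s..t, b t := by
          apply intervalIntegral.integral_mono_on hst.le (hInt s t)
            intervalIntegrable_const
          intro x hx; exact hmono hx.2
      _ = b t * (t - s) := by rw [intervalIntegral.integral_const]; ring_nf
  have hslope_lb : ∀ s t : ℝ, 0 ≤ s → s < t → b s ≤ (B t - B s) / (t - s) := by
    intro s t hs hst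
    rw [hsub s t hs hst.le]
    rw [le_div_iff₀ (by linarith)]
    calc b s * (t - s) = ∫ τ in s..t, (fun _ => b s) τ := by
          rw [intervalIntegral.integral_const]; rw [smul_eq_mul]; ring
      _ ≤ ∫ τ in s..t, b τ := by
          apply intervalIntegral.integral_mono_on hst.le intervalIntegrable_const (hInt s t)
          intro x hx; exact hmono hx.1
  -- derivative of f := fun t => N * exp (t ^ β)
  have hderiv : ∀ s : ℝ, 0 < s → HasDerivAt (fun t : ℝ => N * Real.exp (t ^ β))
      (N * (Real.exp (s ^ β) * (β * s ^ (β - 1)))) s := by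
    intro s hs
    have h1 : HasDerivAt (fun t : ℝ => t ^ β) (β * s ^ (β - 1)) s :=
      Real.hasDerivAt_rpow_const (Or.inl hs.ne')
    exact h1.exp.const_mul N
  intro t ht
  set f : ℝ → ℝ := fun t => N * Real.exp (t ^ β) with hf
  have hfB : ∀ u : ℝ, t₀ < u → f u = B u := fun u hu => (hBform u hu).symm
  have htpos : 0 < t := ht₀.trans ht
  have hslopeT := (hasDerivAt_iff_tendsto_slope.1 (hderiv t htpos))
  -- b t ≤ deriv : slopes from the left
  have h1 : N * (Real.exp (t ^ β) * (β * t ^ (β - 1))) ≤ b t := by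
    have hT : Tendsto (slope f t) (nhdsWithin t (Set.Iio t))
        (nhds (N * (Real.exp (t ^ β) * (β * t ^ (β - 1))))) :=
      hslopeT.mono_left (nhdsWithin_mono t fun x hx => ne_of_lt hx)
    refine le_of_tendsto hT ?_
    filter_upwards [Ioo_mem_nhdsLT_of_mem (Set.mem_Ioc.2 ⟨ht, le_refl t⟩)] with s hs
    rw [slope_def_field, hfB t ht, hfB s hs.1, ← neg_div_neg_eq, neg_sub, neg_sub]
    exact hslope_ub s t (le_of_lt (ht₀.trans hs.1)) hs.2
  -- deriv ≤ b t is wrong direction; we need b t ≤ deriv via slopes from the right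
  have h2 : b t ≤ N * (Real.exp (t ^ β) * (β * t ^ (β - 1))) := by
    have hT : Tendsto (slope f t) (nhdsWithin t (Set.Ioi t))
        (nhds (N * (Real.exp (t ^ β) * (β * t ^ (β - 1))))) :=
      hslopeT.mono_left (nhdsWithin_mono t fun x hx => ne_of_gt hx)
    refine ge_of_tendsto hT ?_
    filter_upwards [self_mem_nhdsWithin] with s hs
    rw [slope_def_field, hfB t ht, hfB s (ht.trans hs)]
    exact hslope_lb t s htpos.le hs
  linarith

lemma keyGrow (β N : ℝ) (hβ : 0 < β) (hN : 0 < N) :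
    Tendsto (fun t : ℝ => N * (Real.exp (t ^ β) * (β * t ^ (β - 1)))) atTop atTop := by
  have hlo := (isLittleO_log_rpow_atTop hβ).def
    (show (0:ℝ) < 1/(2*(|β-1|+1)) by positivity)
  have hexp : Tendsto (fun t : ℝ => t ^ β + (β - 1) * Real.log t) atTop atTop := by
    apply tendsto_atTop_mono' atTop
      (show ∀ᶠ t : ℝ in atTop, (1/2) * t ^ β ≤ t ^ β + (β - 1) * Real.log t from ?_)
      ((tendsto_rpow_atTop hβ).const_mul_atTop (by norm_num : (0:ℝ) < 1/2))
    filter_upwards [hlo, eventually_ge_atTop (1:ℝ)] with t hlog ht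
    rw [Real.norm_eq_abs, Real.norm_eq_abs, abs_of_nonneg (Real.rpow_nonneg (by linarith) β)] at hlog
    have h1 : |(β - 1) * Real.log t| ≤ (1/2) * t ^ β := by
      rw [abs_mul]
      calc |β - 1| * |Real.log t| ≤ |β - 1| * (1/(2*(|β-1|+1)) * t ^ β) := by
            apply mul_le_mul_of_nonneg_left hlog (abs_nonneg _)
        _ ≤ (1/2) * t ^ β := by
            rw [← mul_assoc]
            apply mul_le_mul_of_nonneg_right _ (Real.rpow_nonneg (by linarith) β)
            rw [mul_one_div, div_le_iff₀ (by positivity)]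
            nlinarith [abs_nonneg (β-1)]
    have := neg_abs_le ((β - 1) * Real.log t)
    linarith
  have hmain : Tendsto (fun t : ℝ => (N * β) * Real.exp (t ^ β + (β - 1) * Real.log t))
      atTop atTop :=
    (Real.tendsto_exp_atTop.comp hexp).const_mul_atTop (by positivity)
  apply hmain.congr'
  filter_upwards [eventually_gt_atTop (0:ℝ)] with t ht
  rw [Real.rpow_def_of_pos ht (β - 1), Real.exp_add]
  ring

lemma key2 (β N t₀ : ℝ) (hβ : 0 < β) (hN : 0 < N) (ht₀ : 0 < t₀)
    (b : ℝ → ℝ) (hmono : Monotone b)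
    (hlc : ∀ x : ℝ, Filter.Tendsto b (nhdsWithin x (Set.Iio x)) (nhds (b x)))
    (hbg : ∀ t > t₀, b t = N * (Real.exp (t ^ β) * (β * t ^ (β - 1))))
    (binv : ℝ → ℝ)
    (hbinv : ∀ s : ℝ, binv s = sInf {t : ℝ | 0 ≤ t ∧ s ≤ b t}) :
    ∀ M > t₀, ∀ s, b M < s → M ≤ binv s ∧ b (binv s) = s := by
  set g : ℝ → ℝ := fun t => N * (Real.exp (t ^ β) * (β * t ^ (β - 1))) with hg
  intro M hM s hs
  set S : Set ℝ := {t : ℝ | 0 ≤ t ∧ s ≤ b t} with hS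
  have hSne : S.Nonempty := by
    obtain ⟨T, hT⟩ := ((keyGrow β N hβ hN).eventually_ge_atTop s).exists_forall_of_atTop
    refine ⟨max T (t₀ + 1), le_trans (by positivity) (le_max_right T (t₀+1)), ?_⟩
    rw [hbg _ (lt_of_lt_of_le (by linarith) (le_max_right T (t₀+1)))]
    exact hT _ (le_max_left _ _)
  have hbdd : BddBelow S := ⟨0, fun t ht => ht.1⟩
  have hlb : ∀ u ∈ S, M < u := by
    intro u hu
    by_contra h
    push_neg at h
    exact absurd (hu.2.trans (hmono h)) (not_le.2 hs)
  have hxinf : binv s = sInf S := hbinv s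
  have hMx : M ≤ binv s := by
    rw [hxinf]; exact le_csInf hSne fun u hu => (hlb u hu).le
  have hxt₀ : t₀ < binv s := lt_of_lt_of_le hM hMx
  have hxpos : 0 < binv s := ht₀.trans hxt₀
  refine ⟨hMx, ?_⟩
  have hcb : ContinuousAt b (binv s) := by
    have hcg : ContinuousAt g (binv s) := by
      have h1 : ContinuousAt (fun t : ℝ => t ^ β) (binv s) :=
        Real.continuousAt_rpow_const _ β (Or.inl hxpos.ne')
      have h2 : ContinuousAt (fun t : ℝ => t ^ (β - 1)) (binv s) :=
        Real.continuousAt_rpow_const _ (β - 1) (Or.inl hxpos.ne')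
      exact continuousAt_const.mul ((Real.continuous_exp.continuousAt.comp h1).mul
        (continuousAt_const.mul h2))
    apply hcg.congr
    filter_upwards [Ioi_mem_nhds hxt₀] with y hy
    exact (hbg y hy).symm
  have hge : s ≤ b (binv s) := by
    by_contra h
    push_neg at h
    obtain ⟨ε, hε, hball⟩ := Metric.eventually_nhds_iff.1 (hcb.eventually_lt continuousAt_const h)
    obtain ⟨u, huS, hult⟩ := exists_lt_of_csInf_lt hSne
      (show sInf S < binv s + ε by rw [← hxinf]; linarith)
    have hxu : binv s ≤ u := by rw [hxinf]; exact csInf_le hbdd huS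
    have : b u < s := hball (show dist u (binv s) < ε by
      rw [Real.dist_eq, abs_of_nonneg (by linarith)]; rw [hxinf] at hxu hult ⊢; linarith)
    exact absurd huS.2 (not_le.2 this)
  have hle : b (binv s) ≤ s := by
    refine le_of_tendsto (hlc (binv s)) ?_
    filter_upwards [Ioo_mem_nhdsLT_of_mem (Set.mem_Ioc.2 ⟨hxt₀, le_refl _⟩)] with y hy
    by_contra h
    push_neg at h
    have hyS : y ∈ S := ⟨le_of_lt (ht₀.trans hy.1), h.le⟩
    have : binv s ≤ y := by rw [hxinf]; exact csInf_le hbdd hyS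
    exact absurd hy.2 (not_lt.2 this)
  linarith

lemma keyAsym (β A : ℝ) (hβ : 0 < β) (hβ1 : β ≠ 1) (y L : ℝ → ℝ)
    (hy : Tendsto y atTop atTop) (hL : Tendsto L atTop atTop)
    (heq : ∀ᶠ s in atTop, y s = L s - A - ((β-1)/β) * Real.log (y s)) :
    Tendsto (fun s => ((y s) ^ ((1-β)/β) - (L s) ^ ((1-β)/β)) /
      ((L s) ^ ((1-β)/β - 1) * Real.log (L s))) atTop (nhds (((1-β)/β)^2)) := by
  set γ : ℝ := (β-1)/β with hγ
  set α : ℝ := (1-β)/β with hα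
  have hαγ : α = -γ := by rw [hα, hγ]; ring
  have hγ0 : γ ≠ 0 := by
    rw [hγ, div_ne_zero_iff]
    exact ⟨sub_ne_zero.2 hβ1, hβ.ne'⟩
  clear hγ hα
  clear_value γ α
  have hylog : Tendsto (fun s => Real.log (y s)) atTop atTop := Real.tendsto_log_atTop.comp hy
  have hLlog : Tendsto (fun s => Real.log (L s)) atTop atTop := Real.tendsto_log_atTop.comp hL
  have hlogdiv : Tendsto (fun x : ℝ => Real.log x / x) atTop (nhds 0) :=
    Real.isLittleO_log_id_atTop.tendsto_div_nhds_zero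
  -- T1 : L/y → 1
  have T1 : Tendsto (fun s => L s / y s) atTop (nhds 1) := by
    have h1 : Tendsto (fun s => 1 + A * (y s)⁻¹ + γ * (Real.log (y s) / y s)) atTop
        (nhds (1 + A * 0 + γ * 0)) :=
      ((tendsto_const_nhds.add (tendsto_const_nhds.mul hy.inv_tendsto_atTop)).add
        (tendsto_const_nhds.mul (hlogdiv.comp hy)))
    rw [show (1 : ℝ) + A * 0 + γ * 0 = 1 by ring] at h1
    apply h1.congr'
    filter_upwards [heq, hy.eventually_gt_atTop 0] with s hs hy0
    generalize hgl : Real.log (y s) = ly at hs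
    have hLs : L s = y s + A + γ * ly := by linarith
    rw [hLs]
    field_simp
  -- T1' : y/L → 1
  have T1' : Tendsto (fun s => y s / L s) atTop (nhds 1) := by
    have := (T1.inv₀ one_ne_zero)
    rw [inv_one] at this
    apply this.congr'
    filter_upwards [hy.eventually_gt_atTop 0, hL.eventually_gt_atTop 0] with s h1 h2
    rw [inv_div]
  -- T2 : log y - log L → 0
  have T2 : Tendsto (fun s => Real.log (y s) - Real.log (L s)) atTop (nhds 0) := by
    have h1 : Tendsto (fun s => Real.log (y s / L s)) atTop (nhds (Real.log 1)) :=
      (Real.continuousAt_log one_ne_zero).tendsto.comp T1'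
    rw [Real.log_one] at h1
    apply h1.congr'
    filter_upwards [hy.eventually_gt_atTop 0, hL.eventually_gt_atTop 0] with s h1 h2
    rw [Real.log_div h1.ne' h2.ne']
  -- T3 : log y / log L → 1
  have T3 : Tendsto (fun s => Real.log (y s) / Real.log (L s)) atTop (nhds 1) := by
    have h1 : Tendsto (fun s => (Real.log (y s) - Real.log (L s)) * (Real.log (L s))⁻¹ + 1)
        atTop (nhds (0 * 0 + 1)) :=
      (T2.mul hLlog.inv_tendsto_atTop).add tendsto_const_nhds
    rw [show (0:ℝ) * 0 + 1 = 1 by ring] at h1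
    apply h1.congr'
    filter_upwards [hLlog.eventually_gt_atTop 0] with s hs
    field_simp
    ring
  -- T4 : u / log L → -γ   where u = -A - γ log y
  set u : ℝ → ℝ := fun s => -A - γ * Real.log (y s) with hu
  have T4 : Tendsto (fun s => u s / Real.log (L s)) atTop (nhds (-γ)) := by
    have h1 : Tendsto (fun s => -A * (Real.log (L s))⁻¹ - γ * (Real.log (y s) / Real.log (L s)))
        atTop (nhds (-A * 0 - γ * 1)) :=
      (tendsto_const_nhds.mul hLlog.inv_tendsto_atTop).sub (tendsto_const_nhds.mul T3)
    rw [show -A * 0 - γ * 1 = -γ by ring] at h1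
    apply h1.congr'
    filter_upwards [hLlog.eventually_gt_atTop 0] with s hs
    rw [hu]; field_simp
  -- T5 : w → 0  where w = u / L
  set w : ℝ → ℝ := fun s => u s / L s with hw
  have T5 : Tendsto w atTop (nhds 0) := by
    have h1 : Tendsto (fun s => (u s / Real.log (L s)) * (Real.log (L s) / L s)) atTop
        (nhds (-γ * 0)) := T4.mul (hlogdiv.comp hL)
    rw [mul_zero] at h1
    apply h1.congr'
    filter_upwards [hLlog.eventually_gt_atTop 0, hL.eventually_gt_atTop 0] with s h1 h2
    rw [hw]
    field_simp
  -- T6 : eventually w ≠ 0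
  have T6 : ∀ᶠ s in atTop, w s ≠ 0 := by
    filter_upwards [T4.eventually_ne (show -γ ≠ 0 by simpa using hγ0),
      hL.eventually_gt_atTop 0] with s h1 h2
    intro h
    rw [hw] at h
    have : u s = 0 := by
      field_simp at h; simpa using h
    rw [this] at h1
    simp at h1
  -- T7 : slope of (1+v)^α at 0
  have T7 : Tendsto (fun s => ((1 + w s) ^ α - 1) / w s) atTop (nhds α) := by
    have hψ : HasDerivAt (fun v : ℝ => (1 + v) ^ α) α 0 := by
      have h1 : HasDerivAt (fun v : ℝ => 1 + v) 1 0 := (hasDerivAt_id 0).const_add 1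
      have h2 : HasDerivAt (fun x : ℝ => x ^ α) (α * (1:ℝ) ^ (α - 1)) ((fun v : ℝ => 1 + v) 0) := by
        simpa using (Real.hasDerivAt_rpow_const (p := α) (Or.inl one_ne_zero))
      have h3 := h2.comp (0:ℝ) h1
      simpa [Function.comp_def] using h3
    have hslope := hasDerivAt_iff_tendsto_slope.1 hψ
    have hwin : Tendsto w atTop (nhdsWithin 0 {(0:ℝ)}ᶜ) :=
      tendsto_nhdsWithin_iff.2 ⟨T5, T6⟩
    have := hslope.comp hwin
    apply this.congr
    intro s
    simp only [Function.comp_apply, slope_def_field]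
    rw [show ((1:ℝ) + 0) ^ α = 1 by norm_num [Real.one_rpow]]
    rw [sub_zero]
  -- main
  have hmain : Tendsto (fun s => (((1 + w s) ^ α - 1) / w s) * (u s / Real.log (L s)))
      atTop (nhds (α * -γ)) := T7.mul T4
  rw [show (α:ℝ)^2 = α * -γ by rw [hαγ]; ring]
  apply hmain.congr'
  filter_upwards [heq, hy.eventually_gt_atTop 0, hL.eventually_gt_atTop 0,
    hLlog.eventually_gt_atTop 0, T6, T5.eventually (Metric.ball_mem_nhds 0 (by norm_num : (0:ℝ) < 1/2))]
    with s hs hy0 hL0 hlog0 hw0 hwsm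
  have hw1 : 0 < 1 + w s := by
    rw [Real.dist_eq, sub_zero] at hwsm
    have := abs_lt.1 hwsm
    linarith [this.1]
  have hyw : y s = L s * (1 + w s) := by
    have : y s = L s + u s := by rw [hs, hu]; ring
    rw [this, hw]
    field_simp
  have hrp : (y s) ^ α = (L s) ^ α * (1 + w s) ^ α := by
    rw [hyw, Real.mul_rpow hL0.le hw1.le]
  have hLsplit : (L s) ^ α = (L s) ^ (α - 1) * L s := by
    rw [← Real.rpow_add_one hL0.ne' (α - 1)]
    norm_num
  have hus : u s = w s * L s := by rw [hw]; field_simp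
  rw [hrp, hLsplit, hus]
  have hLa : (L s) ^ (α - 1) ≠ 0 := (Real.rpow_pos_of_pos hL0 _).ne'
  field_simp

/-- Asymptotics of `B ∘ b⁻¹` for a Young function `B` with `B(t) = N e^{t^β}` for
large `t`:
`B(b⁻¹(t)) = (1/β) t (log t)^{1/β-1} + ((1-β)²/β³) t (log t)^{1/β-2} log log t
            + o(t (log t)^{1/β-2} log log t)` as `t → ∞`;
in particular there is `t₁ > 1` with `B(b⁻¹(t)) ≥ (t/β)(log t)^{1/β-1}` for
all `t > t₁`. -/
theorem B_binv_asymptotics (β N t₀ : ℝ) (hβ : 0 < β) (hN : 0 < N) (ht₀ : 0 < t₀)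
    (b B : ℝ → ℝ) (hmono : Monotone b) (hb0 : ∀ t ≤ (0:ℝ), b t = 0)
    (hlc : ∀ x : ℝ, Filter.Tendsto b (nhdsWithin x (Set.Iio x)) (nhds (b x)))
    (hB : ∀ t : ℝ, 0 ≤ t → B t = ∫ τ in (0:ℝ)..t, b τ)
    (hBform : ∀ t > t₀, B t = N * Real.exp (t ^ β))
    (binv : ℝ → ℝ)
    (hbinv : ∀ s : ℝ, binv s = sInf {t : ℝ | 0 ≤ t ∧ s ≤ b t}) :
    Filter.Tendsto (fun t : ℝ =>
        (B (binv t) - (1/β) * t * (Real.log t) ^ (1/β - 1)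
          - ((1 - β) ^ 2 / β ^ 3) * t * (Real.log t) ^ (1/β - 2)
              * Real.log (Real.log t))
        / (t * (Real.log t) ^ (1/β - 2) * Real.log (Real.log t)))
      Filter.atTop (nhds 0) ∧
    ∃ t₁ > (1:ℝ), ∀ t > t₁, (t / β) * (Real.log t) ^ (1/β - 1) ≤ B (binv t) := by
  have hbg : ∀ t > t₀, b t = N * (Real.exp (t ^ β) * (β * t ^ (β - 1))) :=
    key1 β N t₀ hβ ht₀ b B hmono hB hBform
  have hkey2 := key2 β N t₀ hβ hN ht₀ b hmono hlc hbg binv hbinv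
  have hxtends : Tendsto binv atTop atTop := by
    rw [tendsto_atTop]
    intro M
    filter_upwards [eventually_gt_atTop (b (max (t₀+1) M))] with s hs
    have h := hkey2 (max (t₀+1) M) (lt_of_lt_of_le (by linarith) (le_max_left _ _)) s hs
    exact le_trans (le_max_right _ _) h.1
  have hy : Tendsto (fun s => (binv s) ^ β) atTop atTop := (tendsto_rpow_atTop hβ).comp hxtends
  have hL : Tendsto Real.log atTop atTop := Real.tendsto_log_atTop
  have hNβ : 0 < N * β := by positivity
  have hfacts : ∀ᶠ s in atTop,
      ((binv s) ^ β = Real.log s - Real.log (N*β) - ((β-1)/β) * Real.log ((binv s) ^ β)) ∧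
      B (binv s) = s / β * ((binv s) ^ β) ^ ((1-β)/β) := by
    filter_upwards [eventually_gt_atTop (b (t₀+1))] with s hs
    obtain ⟨hx1, hx2⟩ := hkey2 (t₀+1) (by linarith) s hs
    have hxt : t₀ < binv s := by linarith
    have hxpos : 0 < binv s := lt_trans ht₀ hxt
    have hbx : N * (Real.exp ((binv s) ^ β) * (β * (binv s) ^ (β-1))) = s := by
      rw [← hbg _ hxt]; exact hx2
    have hxb1 : 0 < (binv s) ^ (β-1) := Real.rpow_pos_of_pos hxpos _
    have hlogs : Real.log s = Real.log (N*β) + (β-1) * Real.log (binv s) + (binv s) ^ β := by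
      conv_lhs => rw [← hbx]
      rw [show N * (Real.exp ((binv s) ^ β) * (β * (binv s) ^ (β-1)))
          = (N*β) * ((binv s) ^ (β-1) * Real.exp ((binv s) ^ β)) by ring]
      rw [Real.log_mul hNβ.ne' (by positivity), Real.log_mul hxb1.ne' (Real.exp_pos _).ne',
        Real.log_exp, Real.log_rpow hxpos]
      ring
    constructor
    · generalize hxv : binv s = xv at hxpos hlogs ⊢
      rw [Real.log_rpow hxpos, hlogs]
      field_simp
      ring
    · rw [hBform _ hxt]
      generalize hxv : binv s = xv at hxpos hxb1 hbx ⊢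
      have h1 : (xv ^ β) ^ ((1-β)/β) = xv ^ (1-β) := by
        rw [← Real.rpow_mul hxpos.le]
        congr 1
        field_simp
      rw [h1]
      have h2 : xv ^ (1-β) = (xv ^ (β-1))⁻¹ := by
        rw [← Real.rpow_neg hxpos.le]
        congr 1
        ring
      rw [h2, ← hbx]
      field_simp
  by_cases hβ1 : β = 1
  · subst hβ1
    have hBs : ∀ᶠ s in atTop, B (binv s) = s := by
      filter_upwards [hfacts] with s hs
      rw [hs.2]
      norm_num
    constructor
    · apply tendsto_const_nhds.congr'
      filter_upwards [hBs] with s hs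
      rw [hs]
      norm_num
    · obtain ⟨a, ha⟩ := eventually_atTop.1 hBs
      refine ⟨max a 2, lt_of_lt_of_le one_lt_two (le_max_right _ _), fun t ht => ?_⟩
      rw [ha t (le_trans (le_max_left _ _) ht.le)]
      norm_num
  · have hasym := keyAsym β (Real.log (N*β)) hβ hβ1 (fun s => (binv s) ^ β) Real.log hy hL
      (hfacts.mono fun s hs => hs.1)
    have e1 : 1/β - 1 = (1-β)/β := by field_simp
    have e2 : 1/β - 2 = (1-β)/β - 1 := by field_simp; ring
    have h1β : (1:ℝ) - β ≠ 0 := sub_ne_zero.2 (fun h => hβ1 h.symm)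
    set c : ℝ := (1-β)^2/β^3 with hc
    have hcpos : 0 < c := div_pos (pow_two_pos_of_ne_zero h1β) (by positivity)
    have hval : (1/β) * ((1-β)/β)^2 - c = 0 := by rw [hc]; field_simp; ring
    have hT1 : Tendsto (fun t : ℝ =>
        (B (binv t) - (1/β) * t * (Real.log t) ^ (1/β - 1)
          - ((1 - β) ^ 2 / β ^ 3) * t * (Real.log t) ^ (1/β - 2)
              * Real.log (Real.log t))
        / (t * (Real.log t) ^ (1/β - 2) * Real.log (Real.log t)))
        atTop (nhds 0) := by
      have h2 := (hasym.const_mul (1/β)).sub_const c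
      rw [hval] at h2
      apply h2.congr'
      filter_upwards [hfacts, eventually_gt_atTop (Real.exp 2)] with s hs hse
      have hs0 : 0 < s := lt_trans (Real.exp_pos 2) hse
      have hls : 1 < Real.log s := by
        have := Real.log_lt_log (Real.exp_pos 2) hse
        rw [Real.log_exp] at this
        linarith
      have hls0 : 0 < Real.log s := by linarith
      have hlls : 0 < Real.log (Real.log s) := Real.log_pos hls
      have hrp1 : 0 < (Real.log s) ^ ((1-β)/β - 1) := Real.rpow_pos_of_pos hls0 _
      rw [hs.2, e1, e2, hc]
      field_simp
    refine ⟨hT1, ?_⟩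
    have hev2 := hT1.eventually (eventually_gt_nhds (show -c < 0 by linarith))
    have hfin : ∀ᶠ s in atTop, (s/β) * (Real.log s) ^ (1/β - 1) ≤ B (binv s) := by
      filter_upwards [hev2, eventually_gt_atTop (Real.exp 2)] with s hf hse
      have hs0 : 0 < s := lt_trans (Real.exp_pos 2) hse
      have hls : 1 < Real.log s := by
        have := Real.log_lt_log (Real.exp_pos 2) hse
        rw [Real.log_exp] at this
        linarith
      have hls0 : 0 < Real.log s := by linarith
      have hlls : 0 < Real.log (Real.log s) := Real.log_pos hls
      have hrp2 : 0 < (Real.log s) ^ (1/β - 2) := Real.rpow_pos_of_pos hls0 _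
      set D : ℝ := s * (Real.log s) ^ (1/β - 2) * Real.log (Real.log s) with hD
      have hDpos : 0 < D := by rw [hD]; positivity
      set Num : ℝ := B (binv s) - (1/β) * s * (Real.log s) ^ (1/β - 1)
          - ((1 - β) ^ 2 / β ^ 3) * s * (Real.log s) ^ (1/β - 2) * Real.log (Real.log s) with hNum
      have hNumD : Num = (Num / D) * D := (div_mul_cancel₀ _ hDpos.ne').symm
      have hf' : -c < Num / D := hf
      have hkey : B (binv s) - (1/β) * s * (Real.log s) ^ (1/β - 1) = (Num / D + c) * D := by
        rw [hNum, hD, hc]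
        field_simp
        ring
      have hpos : 0 ≤ (Num / D + c) * D := mul_nonneg (by linarith) hDpos.le
      have h3 : 0 ≤ B (binv s) - 1/β * s * Real.log s ^ (1/β-1) := by
        rw [hkey]; exact hpos
      have h4 : s/β * Real.log s ^ (1/β-1) = 1/β * s * Real.log s ^ (1/β-1) := by ring
      linarith
    obtain ⟨a, ha⟩ := eventually_atTop.1 hfin
    refine ⟨max a 2, lt_of_lt_of_le one_lt_two (le_max_right _ _), fun t ht => ?_⟩
    exact ha t (le_trans (le_max_left _ _) ht.le)
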